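/- Let V be a finite-dimensional complex vector space with dim V = n and let N : V → V be of hook type with parameters (n, b): N^b = 0, N^{b−1} ≠ 0, and dim(im N) = b − 1. Let i_1 < i_2 < ⋯ < i_{b−1} and i'_1 < i'_2 < ⋯ < i'_{b−1} be two strictly increasing sequences of integers in {1, …, n−1}, and set i_b = i'_b = n. Then there exists a complete flag F(0) ⊂ ⋯ ⊂ F(n) in V fixed by N satisfying both im N^{b−j} ⊆ F(i_j) ⊆ ker N^j and im N^{b−j} ⊆ F(i'_j) ⊆ ker N^j for all 1 ≤ j ≤ b − 1, if and only if max(i_j, i'_j) < min(i_{j+1}, i'_{j+1}) for all 1 ≤ j ≤ b − 1. -/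

import Mathlib

/-- Nonemptiness criterion for the intersection of two hook-type Springer fiber
components: for a hook-type nilpotent `N` and two strictly increasing sequences
`i_1 < ⋯ < i_(b-1)` and `i'_1 < ⋯ < i'_(b-1)` in `{1, …, n-1}` with `i_b = i'_b = n`,
there is a complete flag fixed by `N` satisfying
`im N^(b-j) ⊆ F(i_j) ⊆ ker N^j` and `im N^(b-j) ⊆ F(i'_j) ⊆ ker N^j` for all
`1 ≤ j ≤ b - 1` iff `max (i_j) (i'_j) < min (i_(j+1)) (i'_(j+1))` for all
`1 ≤ j ≤ b - 1`. -/
theorem hook_components_intersection_nonempty_iff {V : Type*} [AddCommGroup V]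
    [Module ℂ V] [FiniteDimensional ℂ V] (n b : ℕ) (hn : Module.finrank ℂ V = n)
    (N : V →ₗ[ℂ] V) (hNb : N ^ b = 0) (hNb1 : N ^ (b - 1) ≠ 0)
    (hrank : Module.finrank ℂ (LinearMap.range N) = b - 1)
    (i i' : ℕ → ℕ)
    (hi : ∀ j : ℕ, 1 ≤ j → j ≤ b - 1 → 1 ≤ i j ∧ i j ≤ n - 1)
    (hi' : ∀ j : ℕ, 1 ≤ j → j ≤ b - 1 → 1 ≤ i' j ∧ i' j ≤ n - 1)
    (hmono : ∀ j : ℕ, 1 ≤ j → j + 1 ≤ b - 1 → i j < i (j + 1))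
    (hmono' : ∀ j : ℕ, 1 ≤ j → j + 1 ≤ b - 1 → i' j < i' (j + 1))
    (hib : i b = n) (hib' : i' b = n) :
    (∃ F : ℕ → Submodule ℂ V,
      (∀ k : ℕ, k ≤ n → Module.finrank ℂ (F k) = k) ∧
      (∀ k : ℕ, k < n → F k ≤ F (k + 1)) ∧
      (∀ k : ℕ, 1 ≤ k → k ≤ n → (F k).map N ≤ F (k - 1)) ∧
      (∀ j : ℕ, 1 ≤ j → j ≤ b - 1 →
        (LinearMap.range (N ^ (b - j)) ≤ F (i j) ∧ F (i j) ≤ LinearMap.ker (N ^ j)) ∧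
        (LinearMap.range (N ^ (b - j)) ≤ F (i' j) ∧ F (i' j) ≤ LinearMap.ker (N ^ j)))) ↔
    (∀ j : ℕ, 1 ≤ j → j ≤ b - 1 →
      max (i j) (i' j) < min (i (j + 1)) (i' (j + 1))) := by
  classical
  have hb1 : 1 ≤ b := by
    by_contra h
    have hb0 : b = 0 := by omega
    rw [hb0] at hNb
    exact hNb1 (by simpa [hb0] using hNb)
  have hn1 : 1 ≤ n := by
    by_contra h
    have hn0 : n = 0 := by omega
    rw [hn0] at hn
    have hsub : Subsingleton V := Module.finrank_zero_iff.mp hn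
    exact hNb1 (LinearMap.ext fun x => Subsingleton.elim _ _)
  constructor
  · rintro ⟨F, hdim, hle, hmap, hsand⟩ j hj1 hjb
    have hFmono : ∀ k l : ℕ, k ≤ l → l ≤ n → F k ≤ F l := by
      intro k l hkl hln
      induction l with
      | zero =>
        have hk0 : k = 0 := by omega
        exact le_of_eq (by rw [hk0])
      | succ m ih =>
        rcases Nat.eq_or_lt_of_le hkl with h | h
        · exact le_of_eq (by rw [h])
        · exact le_trans (ih (by omega) (by omega)) (hle m (by omega))
    have hcross : ∀ k l : ℕ, k ≤ n → F k ≤ LinearMap.ker (N ^ j) →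
        LinearMap.range (N ^ (b - (j + 1))) ≤ F l → l ≤ k → False := by
      intro k l hkn hker hrange hlk
      have h1 : LinearMap.range (N ^ (b - (j + 1))) ≤ LinearMap.ker (N ^ j) :=
        hrange.trans ((hFmono l k hlk hkn).trans hker)
      apply hNb1
      have hpow : N ^ j * N ^ (b - (j + 1)) = N ^ (b - 1) := by
        rw [← pow_add]
        congr 1
        omega
      apply LinearMap.ext
      intro x
      rw [← hpow]
      have h2 := h1 (LinearMap.mem_range.mpr ⟨x, rfl⟩)
      simpa [Module.End.mul_apply] using LinearMap.mem_ker.mp h2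
    rcases Nat.lt_or_ge j (b - 1) with hlt | hge
    · obtain ⟨⟨_, hk⟩, ⟨_, hk'⟩⟩ := hsand j hj1 hjb
      obtain ⟨⟨hr, _⟩, ⟨hr', _⟩⟩ := hsand (j + 1) (by omega) (by omega)
      have hin := hi j hj1 hjb
      have hin' := hi' j hj1 hjb
      have h1 : i j < i' (j + 1) := by
        by_contra h
        exact hcross (i j) (i' (j + 1)) (by omega) hk hr' (by omega)
      have h2 : i' j < i (j + 1) := by
        by_contra h
        exact hcross (i' j) (i (j + 1)) (by omega) hk' hr (by omega)
      have h3 := hmono j hj1 (by omega)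
      have h4 := hmono' j hj1 (by omega)
      omega
    · have hin := hi j hj1 hjb
      have hin' := hi' j hj1 hjb
      have hj1b : j + 1 = b := by omega
      rw [hj1b, hib, hib']
      omega
  · intro hcnd
    obtain ⟨v, hv⟩ : ∃ v : V, (N ^ (b - 1)) v ≠ 0 := by
      by_contra h
      push_neg at h
      exact hNb1 (LinearMap.ext fun x => h x)
    set c : ℕ → V := fun m => (N ^ (b - 1 - m)) v with hcdef
    have hNe0 : ∀ e : ℕ, b ≤ e → (N ^ e : V →ₗ[ℂ] V) = 0 := by
      intro e he
      have h : N ^ e = N ^ (e - b) * N ^ b := by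
        rw [← pow_add]
        congr 1
        omega
      rw [h, hNb, mul_zero]
    have hcsucc : ∀ m : ℕ, 1 ≤ m → m < b → N (c m) = c (m - 1) := by
      intro m h1 h2
      show N ((N ^ (b - 1 - m)) v) = (N ^ (b - 1 - (m - 1))) v
      rw [← Module.End.mul_apply, ← pow_succ']
      have h3 : b - 1 - m + 1 = b - 1 - (m - 1) := by omega
      rw [h3]
    have hc0 : N (c 0) = 0 := by
      show N ((N ^ (b - 1 - 0)) v) = 0
      rw [← Module.End.mul_apply, ← pow_succ']
      have h3 : b - 1 - 0 + 1 = b := by omega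
      rw [h3, hNb]
      simp
    have hchain : LinearIndependent ℂ (fun m : Fin b => c m.val) := by
      rw [Fintype.linearIndependent_iff]
      intro g hg
      by_contra hcon
      push_neg at hcon
      obtain ⟨m0, hm0⟩ := hcon
      set Sf := Finset.univ.filter (fun m : Fin b => g m ≠ 0) with hSf
      have hSne : Sf.Nonempty := ⟨m0, by simp [hSf, hm0]⟩
      set M := Sf.max' hSne with hM
      have hMmem : M ∈ Sf := Sf.max'_mem hSne
      have hgM : g M ≠ 0 := by simpa [hSf] using hMmem
      have hMlt : M.val < b := M.isLt
      have hmax : ∀ m : Fin b, M < m → g m = 0 := by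
        intro m hm
        by_contra hgm
        exact absurd (Finset.le_max' Sf m (by simp [hSf, hgm])) (not_le.mpr hm)
      have h1 : (N ^ M.val) (∑ m : Fin b, g m • c m.val) = 0 := by
        rw [hg]
        simp
      rw [map_sum] at h1
      simp only [map_smul] at h1
      have h2 : ∀ m : Fin b, m ≠ M → g m • (N ^ M.val) (c m.val) = 0 := by
        intro m hm
        rcases lt_trichotomy m M with h | h | h
        · have hml : m.val < M.val := h
          have hz : (N ^ M.val) (c m.val) = 0 := by
            show (N ^ M.val) ((N ^ (b - 1 - m.val)) v) = 0
            rw [← Module.End.mul_apply, ← pow_add, hNe0 _ (by omega)]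
            simp
          rw [hz, smul_zero]
        · exact absurd h hm
        · rw [hmax m h, zero_smul]
      rw [Finset.sum_eq_single M (fun m _ hm => h2 m hm)
        (fun h => absurd (Finset.mem_univ M) h)] at h1
      have h3 : (N ^ M.val) (c M.val) = (N ^ (b - 1)) v := by
        show (N ^ M.val) ((N ^ (b - 1 - M.val)) v) = _
        rw [← Module.End.mul_apply, ← pow_add]
        have h4 : M.val + (b - 1 - M.val) = b - 1 := by omega
        rw [h4]
      rw [h3] at h1
      rcases smul_eq_zero.mp h1 with h | h
      · exact hgM h
      · exact hv h
    have hbn : b ≤ n := by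
      have h := hchain.fintype_card_le_finrank
      simpa [hn] using h
    have hkerrank : Module.finrank ℂ (LinearMap.ker N) = n - b + 1 := by
      have h := LinearMap.finrank_range_add_finrank_ker N
      rw [hrank, hn] at h
      omega
    have hc0mem : c 0 ∈ LinearMap.ker N := LinearMap.mem_ker.mpr hc0
    have hc0ne : c 0 ≠ 0 := by
      show (N ^ (b - 1 - 0)) v ≠ 0
      simpa using hv
    obtain ⟨q, hq⟩ := Submodule.exists_isCompl
      (ℂ ∙ (⟨c 0, hc0mem⟩ : LinearMap.ker N))
    have hqrank : Module.finrank ℂ q = n - b := by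
      have h1 := Submodule.finrank_add_eq_of_isCompl hq
      have h2 : Module.finrank ℂ (ℂ ∙ (⟨c 0, hc0mem⟩ : LinearMap.ker N)) = 1 := by
        apply finrank_span_singleton
        intro hz
        exact hc0ne (congrArg Subtype.val hz)
      rw [h2, hkerrank] at h1
      omega
    set W : Submodule ℂ V := q.map (LinearMap.ker N).subtype with hWdef
    have hWrank : Module.finrank ℂ W = n - b := by
      rw [hWdef, Submodule.finrank_map_subtype_eq]
      exact hqrank
    have hWle : W ≤ LinearMap.ker N := Submodule.map_subtype_le _ _
    let Bw : Module.Basis (Fin (n - b)) ℂ W := Module.finBasisOfFinrankEq ℂ W hWrank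
    set w : ℕ → V := fun m => if h : m < n - b then (Bw ⟨m, h⟩ : V) else 0 with hwdef
    have hwW : ∀ m : ℕ, m < n - b → w m ∈ W := by
      intro m hm
      simp only [hwdef, dif_pos hm]
      exact (Bw ⟨m, hm⟩).2
    have hwker : ∀ m : ℕ, N (w m) = 0 := by
      intro m
      by_cases hm : m < n - b
      · exact LinearMap.mem_ker.mp (hWle (hwW m hm))
      · simp [hwdef, dif_neg hm]
    have hwind : LinearIndependent ℂ (fun m : Fin (n - b) => w m.val) := by
      have h0 : LinearIndependent ℂ (W.subtype ∘ Bw) :=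
        Bw.linearIndependent.map' W.subtype (Submodule.ker_subtype W)
      have h1 : (fun m : Fin (n - b) => w m.val) = W.subtype ∘ Bw := by
        funext m
        simp [hwdef, dif_pos m.isLt]
      rw [h1]
      exact h0
    have hdisj : Disjoint (Submodule.span ℂ (Set.range fun m : Fin b => c m.val)) W := by
      rw [Submodule.disjoint_def]
      intro x hxc hxW
      obtain ⟨a, ha⟩ := (Submodule.mem_span_range_iff_exists_fun ℂ).mp hxc
      have hxker : N x = 0 := LinearMap.mem_ker.mp (hWle hxW)
      obtain ⟨b', hb'⟩ : ∃ b', b = b' + 1 := ⟨b - 1, by omega⟩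
      subst hb'
      have h1 : ∑ m : Fin (b' + 1), a m • N (c m.val) = 0 := by
        have h2 : N (∑ m : Fin (b' + 1), a m • c m.val) = 0 := by
          rw [ha]
          exact hxker
        simpa [map_sum, map_smul] using h2
      rw [Fin.sum_univ_succ] at h1
      have hc00 : N (c (0 : Fin (b' + 1)).val) = 0 := hc0
      rw [hc00, smul_zero, zero_add] at h1
      have h2 : ∀ m : Fin b', N (c (m.succ).val) = c m.val := by
        intro m
        have h3 := hcsucc (m.val + 1) (by omega) (by omega)
        simpa using h3
      rw [Finset.sum_congr rfl (fun m _ => by rw [h2 m])] at h1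
      have hsub : LinearIndependent ℂ (fun m : Fin b' => c m.val) :=
        hchain.comp Fin.castSucc (Fin.castSucc_injective b')
      have h3 : ∀ m : Fin b', a m.succ = 0 :=
        Fintype.linearIndependent_iff.mp hsub _ h1
      have hx0 : x = a 0 • c 0 := by
        rw [← ha, Fin.sum_univ_succ]
        simp [h3]
      obtain ⟨y, hyq, hyx⟩ := Submodule.mem_map.mp hxW
      have hyv : (y : V) = a 0 • c 0 := by
        rw [show ((y : V) = (LinearMap.ker N).subtype y) from rfl, hyx]
        exact hx0
      have hyp : y = a 0 • (⟨c 0, hc0mem⟩ : LinearMap.ker N) := Subtype.ext (by simpa using hyv)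
      have hymem : y ∈ (ℂ ∙ (⟨c 0, hc0mem⟩ : LinearMap.ker N)) := by
        rw [hyp]
        exact Submodule.smul_mem _ _ (Submodule.mem_span_singleton_self _)
      have hy0 : y = 0 := (Submodule.disjoint_def.mp hq.disjoint) y hymem hyq
      rw [← hyx, hy0]
      simp
    have hindep : LinearIndependent ℂ
        (Sum.elim (fun m : Fin b => c m.val) (fun m : Fin (n - b) => w m.val)) := by
      apply hchain.sum_type hwind
      refine Disjoint.mono_right ?_ hdisj
      apply Submodule.span_le.mpr
      rintro x ⟨m, rfl⟩
      exact hwW m.val m.isLt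
    set s : ℕ → ℕ := fun j => min (i j) (i' j) with hsdef
    set t : ℕ → ℕ := fun j => max (i j) (i' j) with htdef
    have hst : ∀ j, s j ≤ t j := fun j => min_le_max
    have hts : ∀ j, 1 ≤ j → j ≤ b - 1 → t j < s (j + 1) := hcnd
    have hsb : ∀ j, 1 ≤ j → j ≤ b - 1 → 1 ≤ s j ∧ t j ≤ n - 1 := by
      intro j h1 h2
      have h3 := hi j h1 h2
      have h4 := hi' j h1 h2
      simp only [hsdef, htdef]
      omega
    have hs_gap : ∀ j' j : ℕ, 1 ≤ j → j ≤ j' → j' ≤ b - 1 → s j + (j' - j) ≤ s j' := by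
      intro j'
      induction j' with
      | zero => intro j h1 h2 h3; omega
      | succ m ih =>
        intro j h1 h2 h3
        rcases Nat.eq_or_lt_of_le h2 with h | h
        · rw [h]; omega
        · have hjm : j ≤ m := by omega
          have h4 : s j + (m - j) ≤ s m := ih j h1 hjm (by omega)
          have h5 : t m < s (m + 1) := hts m (by omega) (by omega)
          have h6 : s m ≤ t m := hst m
          omega
    have hs_ge : ∀ j, 1 ≤ j → j ≤ b - 1 → j ≤ s j := by
      intro j h1 h2
      have h3 := hs_gap j 1 le_rfl h1 h2
      have h4 := (hsb 1 le_rfl (by omega)).1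
      omega
    have ht_le : ∀ j, 1 ≤ j → j ≤ b - 1 → t j ≤ n - b + j := by
      have haux : ∀ d j, 1 ≤ j → j ≤ b - 1 → b - 1 - j = d → t j ≤ n - b + j := by
        intro d
        induction d with
        | zero =>
          intro j h1 h2 h3
          have h4 := (hsb j h1 h2).2
          omega
        | succ d ih =>
          intro j h1 h2 h3
          have hj1 : j + 1 ≤ b - 1 := by omega
          have h4 := ih (j + 1) (by omega) hj1 (by omega)
          have h5 := hts j h1 h2
          have h6 := hst (j + 1)
          omega
      intro j h1 h2
      exact haux (b - 1 - j) j h1 h2 rfl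
    set A : ℕ → ℕ := fun k =>
      ((Finset.Icc 1 (b - 1)).filter (fun j => s j ≤ k)).card + (if n ≤ k then 1 else 0)
      with hAdef
    have hAmono : ∀ k l, k ≤ l → A k ≤ A l := by
      intro k l hkl
      simp only [hAdef]
      apply Nat.add_le_add
      · apply Finset.card_le_card
        intro j hj
        simp only [Finset.mem_filter] at hj ⊢
        exact ⟨hj.1, hj.2.trans hkl⟩
      · split_ifs <;> omega
    have hAfull : ∀ k, n - 1 ≤ k →
        ((Finset.Icc 1 (b - 1)).filter (fun j => s j ≤ k)) = Finset.Icc 1 (b - 1) := by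
      intro k hk
      apply Finset.filter_true_of_mem
      intro j hj
      simp only [Finset.mem_Icc] at hj
      have h1 := (hsb j hj.1 hj.2).2
      have h2 := hst j
      omega
    have hAn : A n = b := by
      simp only [hAdef]
      rw [hAfull n (by omega), if_pos le_rfl, Nat.card_Icc]
      omega
    have hAstep : ∀ k, 1 ≤ k → k ≤ n → A k ≤ A (k - 1) + 1 := by
      intro k h1 h2
      rcases eq_or_ne k n with hkn | hkn
      · rw [hkn]
        simp only [hAdef]
        rw [hAfull n (by omega), hAfull (n - 1) le_rfl, if_pos le_rfl, if_neg (by omega)]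
      · have hcard : ((Finset.Icc 1 (b - 1)).filter (fun j => s j ≤ k)).card ≤
            ((Finset.Icc 1 (b - 1)).filter (fun j => s j ≤ k - 1)).card + 1 := by
          have hsubset : (Finset.Icc 1 (b - 1)).filter (fun j => s j ≤ k) ⊆
              ((Finset.Icc 1 (b - 1)).filter (fun j => s j ≤ k - 1)) ∪
              ((Finset.Icc 1 (b - 1)).filter (fun j => s j = k)) := by
            intro j hj
            simp only [Finset.mem_filter, Finset.mem_union, Finset.mem_Icc] at hj ⊢
            omega
          have hone : ((Finset.Icc 1 (b - 1)).filter (fun j => s j = k)).card ≤ 1 := by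
            rw [Finset.card_le_one]
            intro a1 ha1 a2 ha2
            simp only [Finset.mem_filter, Finset.mem_Icc] at ha1 ha2
            by_contra hne
            rcases Nat.lt_or_ge a1 a2 with h | h
            · have := hs_gap a2 a1 ha1.1.1 (by omega) ha2.1.2
              omega
            · have hlt : a2 < a1 := by omega
              have := hs_gap a1 a2 ha2.1.1 (by omega) ha1.1.2
              omega
          calc ((Finset.Icc 1 (b - 1)).filter (fun j => s j ≤ k)).card
              ≤ (((Finset.Icc 1 (b - 1)).filter (fun j => s j ≤ k - 1)) ∪
                ((Finset.Icc 1 (b - 1)).filter (fun j => s j = k))).card :=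
                Finset.card_le_card hsubset
            _ ≤ ((Finset.Icc 1 (b - 1)).filter (fun j => s j ≤ k - 1)).card +
                ((Finset.Icc 1 (b - 1)).filter (fun j => s j = k)).card :=
                Finset.card_union_le _ _
            _ ≤ _ + 1 := by omega
        simp only [hAdef]
        rw [if_neg (by omega), if_neg (by omega)]
        omega
    have hAle : ∀ k, k ≤ n → A k ≤ k := by
      intro k hk
      rcases eq_or_ne k n with h | h
      · rw [h, hAn]; exact hbn
      · simp only [hAdef]
        rw [if_neg (by omega)]
        have hsubset : (Finset.Icc 1 (b - 1)).filter (fun j => s j ≤ k) ⊆ Finset.Icc 1 k := by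
          intro j hj
          simp only [Finset.mem_filter, Finset.mem_Icc] at hj ⊢
          have := hs_ge j hj.1.1 hj.1.2
          omega
        have h2 := Finset.card_le_card hsubset
        rw [Nat.card_Icc] at h2
        omega
    have hAub : ∀ k, k ≤ n → k ≤ A k + (n - b) := by
      intro k hk
      rcases eq_or_ne k n with h | h
      · rw [h, hAn]; omega
      · rcases Nat.lt_or_ge k (n - b + 1) with hsmall | hbig
        · have h2 : (0:ℕ) ≤ A k := Nat.zero_le _
          omega
        · have hr : Finset.Icc 1 (k - (n - b)) ⊆
              (Finset.Icc 1 (b - 1)).filter (fun j => s j ≤ k) := by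
            intro j hj
            simp only [Finset.mem_Icc, Finset.mem_filter] at hj ⊢
            have hj2 : j ≤ b - 1 := by omega
            have h3 := ht_le j hj.1 hj2
            have h4 := hst j
            omega
          have h2 := Finset.card_le_card hr
          rw [Nat.card_Icc] at h2
          have h3 : ((Finset.Icc 1 (b - 1)).filter (fun j => s j ≤ k)).card ≤ A k := by
            simp only [hAdef]
            exact Nat.le_add_right _ _
          omega
    have hAs : ∀ j, 1 ≤ j → j ≤ b - 1 → j ≤ A (s j) := by
      intro j h1 h2
      have hr : Finset.Icc 1 j ⊆ (Finset.Icc 1 (b - 1)).filter (fun l => s l ≤ s j) := by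
        intro l hl
        simp only [Finset.mem_Icc, Finset.mem_filter] at hl ⊢
        refine ⟨⟨hl.1, by omega⟩, ?_⟩
        rcases Nat.eq_or_lt_of_le hl.2 with h | h
        · exact le_of_eq (by rw [h])
        · have := hs_gap j l hl.1 (by omega) h2
          omega
      have h2' := Finset.card_le_card hr
      rw [Nat.card_Icc] at h2'
      have h3 : ((Finset.Icc 1 (b - 1)).filter (fun l => s l ≤ s j)).card ≤ A (s j) := by
        simp only [hAdef]
        exact Nat.le_add_right _ _
      omega
    have hAt : ∀ j, 1 ≤ j → j ≤ b - 1 → A (t j) ≤ j := by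
      intro j h1 h2
      have hr : (Finset.Icc 1 (b - 1)).filter (fun l => s l ≤ t j) ⊆ Finset.Icc 1 j := by
        intro l hl
        simp only [Finset.mem_Icc, Finset.mem_filter] at hl ⊢
        refine ⟨hl.1.1, ?_⟩
        by_contra hlj
        push_neg at hlj
        have h4 : s (j + 1) + (l - (j + 1)) ≤ s l := hs_gap l (j + 1) (by omega) (by omega) hl.1.2
        have h5 := hts j h1 h2
        omega
      have h2' := Finset.card_le_card hr
      rw [Nat.card_Icc] at h2'
      have htn : t j ≤ n - 1 := (hsb j h1 h2).2
      simp only [hAdef]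
      rw [if_neg (by omega)]
      omega
    set F : ℕ → Submodule ℂ V :=
      fun k => Submodule.span ℂ (c '' Set.Iio (A k) ∪ w '' Set.Iio (k - A k)) with hFdef
    have hFstep : ∀ k, k + 1 ≤ n → F k ≤ F (k + 1) := by
      intro k hk
      apply Submodule.span_mono
      apply Set.union_subset_union
      · exact Set.image_mono (Set.Iio_subset_Iio (hAmono k (k + 1) (by omega)))
      · apply Set.image_mono
        apply Set.Iio_subset_Iio
        have h1 := hAstep (k + 1) (by omega) hk
        simp only [Nat.add_sub_cancel] at h1
        have h2 := hAmono k (k + 1) (by omega)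
        omega
    have hFmono : ∀ k l, k ≤ l → l ≤ n → F k ≤ F l := by
      intro k l hkl hln
      induction l with
      | zero =>
        have hk0 : k = 0 := by omega
        exact le_of_eq (by rw [hk0])
      | succ m ih =>
        rcases Nat.eq_or_lt_of_le hkl with h | h
        · exact le_of_eq (by rw [h])
        · exact le_trans (ih (by omega) (by omega)) (hFstep m hln)
    have hFrank : ∀ k, k ≤ n → Module.finrank ℂ (F k) = k := by
      intro k hk
      have hα : A k ≤ b := by
        have := hAmono k n hk
        rw [hAn] at this
        exact this
      have hβ : k - A k ≤ n - b := by
        have := hAub k hk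
        omega
      have hinj : Function.Injective (Sum.map (Fin.castLE hα) (Fin.castLE hβ)) :=
        Function.Injective.sumMap (Fin.castLE_injective _) (Fin.castLE_injective _)
      have he : LinearIndependent ℂ (Sum.elim (fun m : Fin (A k) => c m.val)
          (fun m : Fin (k - A k) => w m.val)) := by
        have h2 := hindep.comp _ hinj
        have h3 : Sum.elim (fun m : Fin (A k) => c m.val) (fun m : Fin (k - A k) => w m.val)
            = (Sum.elim (fun m : Fin b => c m.val) (fun m : Fin (n - b) => w m.val)) ∘
              (Sum.map (Fin.castLE hα) (Fin.castLE hβ)) := by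
          funext x
          cases x <;> rfl
        rw [h3]
        exact h2
      have hr : Set.range (Sum.elim (fun m : Fin (A k) => c m.val)
          (fun m : Fin (k - A k) => w m.val)) = c '' Set.Iio (A k) ∪ w '' Set.Iio (k - A k) := by
        rw [Set.Sum.elim_range]
        congr 1
        · ext x
          constructor
          · rintro ⟨m, rfl⟩
            exact ⟨m.val, m.isLt, rfl⟩
          · rintro ⟨m, hm, rfl⟩
            exact ⟨⟨m, hm⟩, rfl⟩
        · ext x
          constructor
          · rintro ⟨m, rfl⟩
            exact ⟨m.val, m.isLt, rfl⟩
          · rintro ⟨m, hm, rfl⟩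
            exact ⟨⟨m, hm⟩, rfl⟩
      have h4 := finrank_span_eq_card he
      rw [hr] at h4
      show Module.finrank ℂ (Submodule.span ℂ (c '' Set.Iio (A k) ∪ w '' Set.Iio (k - A k))) = k
      rw [h4, Fintype.card_sum, Fintype.card_fin, Fintype.card_fin]
      have := hAle k hk
      omega
    have hFfix : ∀ k, 1 ≤ k → k ≤ n → (F k).map N ≤ F (k - 1) := by
      intro k h1 h2
      simp only [hFdef]
      rw [Submodule.map_span]
      apply Submodule.span_le.mpr
      rintro y ⟨x, hx, rfl⟩
      simp only [Set.mem_union, Set.mem_image, Set.mem_Iio] at hx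
      rcases hx with ⟨m, hm, rfl⟩ | ⟨m, hm, rfl⟩
      · rcases Nat.eq_zero_or_pos m with hm0 | hm1
        · rw [hm0, hc0]
          exact Submodule.zero_mem _
        · have hmb : m < b := by
            have h3 := hAmono k n h2
            rw [hAn] at h3
            omega
          rw [hcsucc m hm1 hmb]
          apply Submodule.subset_span
          apply Set.mem_union_left
          refine ⟨m - 1, Set.mem_Iio.mpr ?_, rfl⟩
          have h3 := hAstep k h1 h2
          omega
      · rw [hwker m]
        exact Submodule.zero_mem _
    have hFtop : F n = ⊤ := Submodule.eq_top_of_finrank_eq (by rw [hFrank n le_rfl, hn])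
    have hkerw : ∀ jj : ℕ, 1 ≤ jj → ∀ m, (N ^ jj) (w m) = 0 := by
      intro jj hjj m
      have h : N ^ jj = N ^ (jj - 1) * N := by
        rw [← pow_succ]
        congr 1
        omega
      rw [h, Module.End.mul_apply, hwker m, map_zero]
    have hrangele : ∀ jj, 1 ≤ jj → jj ≤ b - 1 →
        LinearMap.range (N ^ (b - jj)) ≤ Submodule.span ℂ (c '' Set.Iio jj) := by
      intro jj h1 h2
      have heq : LinearMap.range (N ^ (b - jj)) = (F n).map (N ^ (b - jj)) := by
        rw [hFtop, Submodule.map_top]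
      rw [heq]
      simp only [hFdef]
      rw [Submodule.map_span]
      apply Submodule.span_le.mpr
      rintro y ⟨x, hx, rfl⟩
      simp only [Set.mem_union, Set.mem_image, Set.mem_Iio] at hx
      rcases hx with ⟨m, hm, rfl⟩ | ⟨m, hm, rfl⟩
      · rw [hAn] at hm
        have hcm : (N ^ (b - jj)) (c m) = (N ^ ((b - jj) + (b - 1 - m))) v := by
          show (N ^ (b - jj)) ((N ^ (b - 1 - m)) v) = _
          rw [← Module.End.mul_apply, ← pow_add]
        rcases Nat.lt_or_ge (m + jj) b with hsmall | hbig
        · rw [hcm, hNe0 _ (by omega), LinearMap.zero_apply]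
          exact Submodule.zero_mem _
        · rw [hcm]
          have hmeq : (b - jj) + (b - 1 - m) = b - 1 - (m + jj - b) := by omega
          rw [hmeq]
          apply Submodule.subset_span
          exact ⟨m + jj - b, Set.mem_Iio.mpr (by omega), rfl⟩
      · rw [hkerw (b - jj) (by omega) m]
        exact Submodule.zero_mem _
    refine ⟨F, hFrank, (fun k hk => hFstep k hk), hFfix, ?_⟩
    intro j hj1 hjb
    have hjn := hi j hj1 hjb
    have hjn' := hi' j hj1 hjb
    have hlow : LinearMap.range (N ^ (b - j)) ≤ F (s j) := by
      refine (hrangele j hj1 hjb).trans ?_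
      simp only [hFdef]
      apply Submodule.span_mono
      intro x hx
      obtain ⟨m, hm, rfl⟩ := hx
      apply Set.mem_union_left
      exact ⟨m, Set.mem_Iio.mpr (lt_of_lt_of_le (Set.mem_Iio.mp hm) (hAs j hj1 hjb)), rfl⟩
    have hhigh : F (t j) ≤ LinearMap.ker (N ^ j) := by
      simp only [hFdef]
      apply Submodule.span_le.mpr
      rintro x hx
      simp only [Set.mem_union, Set.mem_image, Set.mem_Iio] at hx
      rcases hx with ⟨m, hm, rfl⟩ | ⟨m, hm, rfl⟩
      · have hmj : m < j := lt_of_lt_of_le hm (hAt j hj1 hjb)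
        apply LinearMap.mem_ker.mpr
        show (N ^ j) ((N ^ (b - 1 - m)) v) = 0
        rw [← Module.End.mul_apply, ← pow_add, hNe0 _ (by omega), LinearMap.zero_apply]
      · exact LinearMap.mem_ker.mpr (hkerw j hj1 m)
    have hsj_le : s j ≤ i j := min_le_left _ _
    have hsj_le' : s j ≤ i' j := min_le_right _ _
    have htj_ge : i j ≤ t j := le_max_left _ _
    have htj_ge' : i' j ≤ t j := le_max_right _ _
    have htn : t j ≤ n := by
      have := (hsb j hj1 hjb).2
      omega
    exact ⟨⟨hlow.trans (hFmono (s j) (i j) hsj_le (by omega)),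
      (hFmono (i j) (t j) htj_ge htn).trans hhigh⟩,
      ⟨hlow.trans (hFmono (s j) (i' j) hsj_le' (by omega)),
      (hFmono (i' j) (t j) htj_ge' htn).trans hhigh⟩⟩
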